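/- arXiv:2305.16878 — 6 statements merged into one kernel-verified Lean document; each statement's English description precedes it below -/
import Mathlib

section
/- Let x, y be strings of length d over an alphabet Σ (functions from Fin d to Σ) and let 0 ≤ k < d. Then the indicator of HD(x,y) ≤ k equals ∑_{I ⊆ [d], |I| ≥ d-k} (-1)^{|I|-d+k} * C(|I|-1, d-k-1) * 1[x restricted to I equals y restricted to I]. -/
open Finset

lemma delta_sum (n r : ℕ) :
    ∑ i ∈ Finset.Icc r n, (-1:ℤ)^(i-r) * (n.choose i) * (i.choose r) =
      if n = r then 1 else 0 := by
  rcases lt_or_ge n r with h | h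
  · rw [Finset.Icc_eq_empty_of_lt h, Finset.sum_empty, if_neg (by omega)]
  · rw [← Finset.Ico_add_one_right_eq_Icc, Finset.sum_Ico_eq_sum_range]
    have hre : ∀ t ∈ Finset.range (n + 1 - r),
        (-1:ℤ)^((r+t)-r) * (n.choose (r+t)) * ((r+t).choose r) =
        (n.choose r : ℤ) * ((-1:ℤ)^t * ((n-r).choose t)) := by
      intro t ht
      simp only [Finset.mem_range] at ht
      have h1 : n.choose (r+t) * (r+t).choose r = n.choose r * (n-r).choose t := by
        have := Nat.choose_mul (n := n) (k := r+t) (s := r) (Nat.le_add_right _ _)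
        simpa using this
      have h2 : r + t - r = t := by omega
      have h1' : ((n.choose (r+t) : ℤ)) * ((r+t).choose r) = (n.choose r : ℤ) * ((n-r).choose t) := by
        exact_mod_cast congrArg (Nat.cast : ℕ → ℤ) h1
      rw [h2]
      linear_combination (-1:ℤ)^t * h1'
    rw [Finset.sum_congr rfl hre, ← Finset.mul_sum]
    have h3 : n + 1 - r = (n - r) + 1 := by omega
    rw [h3, Int.alternating_sum_range_choose]
    rcases eq_or_ne n r with rfl | hne
    · simp
    · rw [if_neg (by omega), if_neg hne, mul_zero]

lemma key_sum (m : ℕ) (hm : 1 ≤ m) : ∀ a : ℕ,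
    ∑ j ∈ Finset.Icc m a, (-1:ℤ)^(j-m) * ((j-1).choose (m-1)) * (a.choose j) =
      if m ≤ a then 1 else 0 := by
  intro a
  induction a with
  | zero => rw [Finset.Icc_eq_empty_of_lt (by omega), Finset.sum_empty, if_neg (by omega)]
  | succ a ih =>
    have split : ∀ j ∈ Finset.Icc m (a+1),
        (-1:ℤ)^(j-m) * ((j-1).choose (m-1)) * ((a+1).choose j) =
        (-1:ℤ)^(j-m) * ((j-1).choose (m-1)) * (a.choose j)
        + (-1:ℤ)^(j-m) * ((j-1).choose (m-1)) * (a.choose (j-1)) := by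
      intro j hj
      simp only [Finset.mem_Icc] at hj
      obtain ⟨j, rfl⟩ : ∃ j', j = j' + 1 := ⟨j - 1, by omega⟩
      rw [Nat.choose_succ_succ']
      push_cast
      ring
    rw [Finset.sum_congr rfl split, Finset.sum_add_distrib]
    have first : ∑ j ∈ Finset.Icc m (a+1),
        (-1:ℤ)^(j-m) * ((j-1).choose (m-1)) * (a.choose j) =
        ∑ j ∈ Finset.Icc m a, (-1:ℤ)^(j-m) * ((j-1).choose (m-1)) * (a.choose j) := by
      rcases le_or_gt m (a+1) with h | h
      · rw [show Finset.Icc m (a+1) = insert (a+1) (Finset.Icc m a) by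
            ext i; simp only [Finset.mem_insert, Finset.mem_Icc]; omega,
          Finset.sum_insert (by simp [Finset.mem_Icc])]
        simp [Nat.choose_succ_self]
      · rw [Finset.Icc_eq_empty_of_lt h, Finset.Icc_eq_empty_of_lt (by omega)]
    have second : ∑ j ∈ Finset.Icc m (a+1),
        (-1:ℤ)^(j-m) * ((j-1).choose (m-1)) * (a.choose (j-1)) =
        ∑ i ∈ Finset.Icc (m-1) a, (-1:ℤ)^(i-(m-1)) * (a.choose i) * (i.choose (m-1)) := by
      rw [← Finset.Ico_add_one_right_eq_Icc, Finset.sum_Ico_eq_sum_range,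
          ← Finset.Ico_add_one_right_eq_Icc, Finset.sum_Ico_eq_sum_range]
      rw [show a + 1 + 1 - m = a + 1 - (m-1) by omega]
      refine Finset.sum_congr rfl fun t _ => ?_
      rw [show m + t - m = t by omega, show m + t - 1 = m - 1 + t by omega,
          show m - 1 + t - (m-1) = t by omega]
      ring
    rw [first, ih, second, delta_sum]
    rcases le_or_gt m a with h | h
    · rw [if_pos h, if_neg (by omega), if_pos (by omega)]; ring
    · rcases eq_or_ne a (m-1) with h2 | h2
      · rw [if_neg (by omega), if_pos h2, if_pos (by omega)]; ring
      · rw [if_neg (by omega), if_neg h2, if_neg (by omega)]; ring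

theorem hd_inclusion_exclusion {d k : ℕ} {Alpha : Type*} [DecidableEq Alpha]
    (x y : Fin d → Alpha) (hk : k < d) :
    (if hammingDist x y ≤ k then (1 : ℤ) else 0) =
      ∑ I ∈ (Finset.univ : Finset (Fin d)).powerset.filter (fun I => d - k ≤ I.card),
        (-1 : ℤ) ^ (I.card - (d - k)) * ((I.card - 1).choose (d - k - 1)) *
          (if ∀ i ∈ I, x i = y i then 1 else 0) := by
  classical
  set m := d - k with hmdef
  have hm : 1 ≤ m := by omega
  set A : Finset (Fin d) := Finset.univ.filter (fun i => x i = y i) with hA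
  have hcard : A.card + hammingDist x y = d := by
    have : hammingDist x y = (Finset.univ.filter (fun i => x i ≠ y i)).card := rfl
    rw [this, hA, Finset.card_filter_add_card_filter_not]
    simp
  have step1 : ∑ I ∈ (Finset.univ : Finset (Fin d)).powerset.filter (fun I => m ≤ I.card),
        (-1 : ℤ) ^ (I.card - m) * ((I.card - 1).choose (m - 1)) *
          (if ∀ i ∈ I, x i = y i then 1 else 0) =
      ∑ I ∈ A.powerset,
        (if m ≤ I.card then (-1 : ℤ) ^ (I.card - m) * ((I.card - 1).choose (m - 1)) else 0) := by
    rw [Finset.sum_filter]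
    have hpows : A.powerset = (Finset.univ : Finset (Fin d)).powerset.filter (· ⊆ A) := by
      ext I; simp [Finset.mem_powerset]
    rw [hpows, Finset.sum_filter]
    refine Finset.sum_congr rfl fun I _ => ?_
    have hiff : (∀ i ∈ I, x i = y i) ↔ I ⊆ A := by
      constructor
      · intro h i hi; simp [hA, h i hi]
      · intro h i hi; have := h hi; simp [hA] at this; exact this
    by_cases h1 : I ⊆ A <;> by_cases h2 : m ≤ I.card <;>
      simp [h1, h2, hiff]
  have step2 : ∑ I ∈ A.powerset,
        (if m ≤ I.card then (-1 : ℤ) ^ (I.card - m) * ((I.card - 1).choose (m - 1)) else 0) =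
      ∑ j ∈ Finset.Icc m A.card,
        (-1:ℤ)^(j-m) * ((j-1).choose (m-1)) * (A.card.choose j) := by
    rw [Finset.sum_powerset]
    have inner : ∀ j ∈ Finset.range (A.card + 1),
        ∑ I ∈ Finset.powersetCard j A,
          (if m ≤ I.card then (-1 : ℤ) ^ (I.card - m) * ((I.card - 1).choose (m - 1)) else 0) =
        (if m ≤ j then (-1:ℤ)^(j-m) * ((j-1).choose (m-1)) * (A.card.choose j) else 0) := by
      intro j _
      rw [Finset.sum_congr rfl (fun I hI => by
        rw [(Finset.mem_powersetCard.mp hI).2]), Finset.sum_const,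
        Finset.card_powersetCard]
      by_cases h : m ≤ j <;> simp [h] <;> ring
    rw [Finset.sum_congr rfl inner, ← Finset.sum_filter,
      show (Finset.range (A.card + 1)).filter (fun j => m ≤ j) = Finset.Icc m A.card by
        ext j; simp only [Finset.mem_filter, Finset.mem_range, Finset.mem_Icc]; omega]
  rw [step1, step2, key_sum m hm A.card]
  have : hammingDist x y ≤ k ↔ m ≤ A.card := by omega
  rw [if_congr this rfl rfl]
end

section
/- Let x be a string of length d over alphabet Σ, X a finite set of strings of length d over Σ, and 0 ≤ k < d. Then the radius r(x,X) = max_{y ∈ X} HD(x,y) satisfies r(x,X) ≤ k if and only if |X| = ∑_{I ⊆ [d], |I| ≥ d-k} (-1)^{|I|-d+k} * C(|I|-1, d-k-1) * |{y ∈ X : x[I] = y[I]}|. -/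
open Finset

private lemma aux_U (r a : ℕ) :
    (∑ j ∈ Finset.range (a + 1),
        (a.choose j : ℤ) * (if r ≤ j then (-1 : ℤ) ^ (j - r) * (j.choose r) else 0)) =
      if a = r then 1 else 0 := by
  rcases lt_or_ge a r with h | h
  · rw [if_neg (by omega)]
    apply Finset.sum_eq_zero
    intro j hj
    rw [Finset.mem_range] at hj
    rw [if_neg (by omega), mul_zero]
  · have hrw : ∀ j ∈ Finset.range (a + 1),
        (a.choose j : ℤ) * (if r ≤ j then (-1 : ℤ) ^ (j - r) * (j.choose r) else 0) =
          (a.choose r : ℤ) *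
            (if r ≤ j then (-1 : ℤ) ^ (j - r) * ((a - r).choose (j - r)) else 0) := by
      intro j hj
      rw [Finset.mem_range] at hj
      by_cases hrj : r ≤ j
      · rw [if_pos hrj, if_pos hrj]
        have hcm := Nat.choose_mul (n := a) hrj
        have h5 : (a.choose j : ℤ) * (j.choose r : ℤ) =
            (a.choose r : ℤ) * ((a - r).choose (j - r) : ℤ) := by exact_mod_cast congrArg Nat.cast hcm
        linear_combination ((-1 : ℤ) ^ (j - r)) * h5
      · rw [if_neg hrj, if_neg hrj, mul_zero, mul_zero]
    rw [Finset.sum_congr rfl hrw, ← Finset.mul_sum]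
    have hsplit : a + 1 = r + (a - r + 1) := by omega
    rw [hsplit, Finset.sum_range_add]
    have h1 : (∑ j ∈ Finset.range r,
        (if r ≤ j then (-1 : ℤ) ^ (j - r) * ((a - r).choose (j - r)) else 0)) = 0 := by
      apply Finset.sum_eq_zero
      intro j hj
      rw [Finset.mem_range] at hj
      rw [if_neg (by omega)]
    have h2 : (∑ j ∈ Finset.range (a - r + 1),
        (if r ≤ r + j then (-1 : ℤ) ^ (r + j - r) * ((a - r).choose (r + j - r)) else 0)) =
        ∑ j ∈ Finset.range (a - r + 1), (-1 : ℤ) ^ j * ((a - r).choose j) := by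
      apply Finset.sum_congr rfl
      intro j hj
      rw [if_pos (by omega)]
      have h6 : r + j - r = j := by omega
      rw [h6]
    rw [h1, zero_add, h2, Int.alternating_sum_range_choose]
    rcases eq_or_lt_of_le h with h' | h'
    · simp [h'.symm]
    · rw [if_neg (by omega), if_neg (by omega), mul_zero]

private lemma aux_g (m : ℕ) (hm : 1 ≤ m) (a : ℕ) :
    (∑ j ∈ Finset.range (a + 1),
        (a.choose j : ℤ) * (if m ≤ j then (-1 : ℤ) ^ (j - m) * ((j - 1).choose (m - 1)) else 0)) =
      if m ≤ a then 1 else 0 := by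
  induction a with
  | zero =>
    rw [Finset.sum_range_one, if_neg (by omega : ¬ m ≤ 0), if_neg (by omega : ¬ m ≤ 0), mul_zero]
  | succ a ih =>
    set t : ℕ → ℤ := fun j => if m ≤ j then (-1 : ℤ) ^ (j - m) * ((j - 1).choose (m - 1)) else 0
      with ht
    have ht0 : t 0 = 0 := by simp only [ht]; rw [if_neg (by omega : ¬ m ≤ 0)]
    have step : (∑ j ∈ Finset.range (a + 2), ((a + 1).choose j : ℤ) * t j) =
        (∑ j ∈ Finset.range (a + 1), (a.choose j : ℤ) * t (j + 1)) +
          (∑ j ∈ Finset.range (a + 1), (a.choose j : ℤ) * t j) := by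
      rw [Finset.sum_range_succ' (fun j => ((a + 1).choose j : ℤ) * t j)]
      simp only [ht0, mul_zero, add_zero]
      have : ∀ j, ((a + 1).choose (j + 1) : ℤ) = (a.choose j : ℤ) + (a.choose (j + 1) : ℤ) := by
        intro j; exact_mod_cast congrArg Nat.cast (Nat.choose_succ_succ a j)
      simp only [this, add_mul]
      rw [Finset.sum_add_distrib]
      congr 1
      have e1 : (∑ j ∈ Finset.range (a + 2), (a.choose j : ℤ) * t j) =
          (∑ j ∈ Finset.range (a + 1), (a.choose (j + 1) : ℤ) * t (j + 1)) := by
        rw [Finset.sum_range_succ' (fun j => (a.choose j : ℤ) * t j)]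
        simp [ht0]
      have e2 : (∑ j ∈ Finset.range (a + 2), (a.choose j : ℤ) * t j) =
          (∑ j ∈ Finset.range (a + 1), (a.choose j : ℤ) * t j) := by
        rw [Finset.sum_range_succ]
        simp [Nat.choose_succ_self]
      rw [← e1, e2]
    have hU : (∑ j ∈ Finset.range (a + 1), (a.choose j : ℤ) * t (j + 1)) =
        if a = m - 1 then 1 else 0 := by
      rw [← aux_U (m - 1) a]
      apply Finset.sum_congr rfl
      intro j hj
      congr 1
      by_cases hmj : m ≤ j + 1
      · simp only [ht]
        rw [if_pos hmj, if_pos (show m - 1 ≤ j by omega)]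
        have h3 : j + 1 - m = j - (m - 1) := by omega
        have h4 : j + 1 - 1 = j := by omega
        rw [h3, h4]
      · simp only [ht]
        rw [if_neg hmj, if_neg (show ¬ m - 1 ≤ j by omega)]
    rw [step, hU, ih]
    split_ifs <;> omega

theorem radius_inclusion_exclusion {d k : ℕ} {Alpha : Type*} [DecidableEq Alpha]
    (x : Fin d → Alpha) (X : Finset (Fin d → Alpha)) (hk : k < d) :
    (∀ y ∈ X, hammingDist x y ≤ k) ↔
      (X.card : ℤ) =
        ∑ I ∈ (Finset.univ : Finset (Fin d)).powerset.filter (fun I => d - k ≤ I.card),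
          (-1 : ℤ) ^ (I.card - (d - k)) * ((I.card - 1).choose (d - k - 1)) *
            ((X.filter (fun y => ∀ i ∈ I, x i = y i)).card : ℤ) := by
  set m := d - k with hm
  have hm1 : 1 ≤ m := by omega
  -- rewrite RHS as sum over y of indicator
  have hRHS : (∑ I ∈ (Finset.univ : Finset (Fin d)).powerset.filter (fun I => m ≤ I.card),
          (-1 : ℤ) ^ (I.card - m) * ((I.card - 1).choose (m - 1)) *
            ((X.filter (fun y => ∀ i ∈ I, x i = y i)).card : ℤ)) =
      ∑ y ∈ X, (if hammingDist x y ≤ k then (1 : ℤ) else 0) := by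
    have h1 : ∀ I : Finset (Fin d),
        ((X.filter (fun y => ∀ i ∈ I, x i = y i)).card : ℤ) =
          ∑ y ∈ X, (if ∀ i ∈ I, x i = y i then (1 : ℤ) else 0) :=
      fun I => Finset.natCast_card_filter _ _
    simp only [h1, Finset.mul_sum]
    rw [Finset.sum_comm]
    apply Finset.sum_congr rfl
    intro y hy
    -- inner sum for fixed y
    set A : Finset (Fin d) := Finset.univ.filter (fun i => x i = y i) with hA
    have hmemA : ∀ I : Finset (Fin d), (∀ i ∈ I, x i = y i) ↔ I ⊆ A := by
      intro I
      constructor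
      · intro h i hi
        rw [hA, Finset.mem_filter]
        exact ⟨Finset.mem_univ i, h i hi⟩
      · intro h i hi
        have := h hi
        rw [hA, Finset.mem_filter] at this
        exact this.2
    have hcardA : A.card + hammingDist x y = d := by
      have := Finset.card_filter_add_card_filter_not
        (s := (Finset.univ : Finset (Fin d))) (p := fun i => x i = y i)
      simpa [hammingDist, hA] using this
    -- convert filtered sum to sum over powerset of A
    have e1 : (∑ I ∈ (Finset.univ : Finset (Fin d)).powerset.filter (fun I => m ≤ I.card),
            (-1 : ℤ) ^ (I.card - m) * ((I.card - 1).choose (m - 1)) *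
              (if ∀ i ∈ I, x i = y i then (1 : ℤ) else 0)) =
        ∑ I ∈ A.powerset,
            (if m ≤ I.card then
              (-1 : ℤ) ^ (I.card - m) * ((I.card - 1).choose (m - 1)) else 0) := by
      rw [Finset.sum_filter]
      have hsub : A.powerset =
          (Finset.univ : Finset (Fin d)).powerset.filter (fun I => I ⊆ A) := by
        ext I
        simp [Finset.mem_powerset, Finset.subset_univ]
      rw [hsub, Finset.sum_filter]
      apply Finset.sum_congr rfl
      intro I hI
      by_cases h1 : I ⊆ A
      · have hP : (∀ i ∈ I, x i = y i) := (hmemA I).mpr h1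
        simp only [if_pos hP, h1, if_true, mul_one]
      · have hno : ¬ (∀ i ∈ I, x i = y i) := fun hh => h1 ((hmemA I).mp hh)
        simp only [if_neg hno, h1, if_false, mul_zero, ite_self]
    rw [e1]
    have e2 := Finset.sum_powerset_apply_card
      (fun n => if m ≤ n then (-1 : ℤ) ^ (n - m) * (((n - 1).choose (m - 1) : ℕ) : ℤ) else 0)
      (x := A)
    simp only [nsmul_eq_mul] at e2
    rw [e2, aux_g m hm1 A.card]
    have hiff : m ≤ A.card ↔ hammingDist x y ≤ k := by omega
    rw [if_congr hiff rfl rfl]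
  rw [hRHS]
  constructor
  · intro h
    rw [Finset.sum_congr rfl (fun y hy => if_pos (h y hy))]
    simp
  · intro h
    by_contra hcon
    push_neg at hcon
    obtain ⟨y₀, hy₀, hy₀'⟩ := hcon
    have hlt : (∑ y ∈ X, (if hammingDist x y ≤ k then (1 : ℤ) else 0)) <
        ∑ y ∈ X, (1 : ℤ) := by
      apply Finset.sum_lt_sum
      · intro i _; split_ifs <;> norm_num
      · have hne : ¬ hammingDist x y₀ ≤ k := not_le.mpr hy₀'
        refine ⟨y₀, hy₀, ?_⟩
        rw [if_neg hne]
        norm_num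
    rw [← h] at hlt
    simp at hlt
end

section
/- Let x be a string of length d over alphabet Σ, X a finite set of strings of length d over Σ, and 0 ≤ k < d. Then min_{y ∈ X \ {x}} HD(x,y) > k (with the convention that the minimum over the empty set is > k) if and only if 1[x ∈ X] = ∑_{I ⊆ [d], |I| ≥ d-k} (-1)^{|I|-d+k} * C(|I|-1, d-k-1) * |{y ∈ X : x[I] = y[I]}|. -/
private lemma lemA (r a : ℕ) (h : r ≤ a) :
    ∑ t ∈ Finset.range (a + 1 - r), (-1 : ℤ) ^ t * ((r + t).choose r) * (a.choose (r + t)) =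
      if a = r then 1 else 0 := by
  have h1 : a + 1 - r = (a - r) + 1 := by omega
  rw [h1]
  have key : ∀ t ∈ Finset.range ((a - r) + 1),
      (-1 : ℤ) ^ t * ((r + t).choose r) * (a.choose (r + t)) =
        (a.choose r : ℤ) * ((-1 : ℤ) ^ t * ((a - r).choose t)) := by
    intro t ht
    rw [Finset.mem_range] at ht
    have h2 : r + t ≤ a := by omega
    have h3 : r ≤ r + t := Nat.le_add_right _ _
    have h5 := Nat.choose_mul (n := a) h3
    have h4 : r + t - r = t := by omega
    rw [h4] at h5
    have h6 : (a.choose (r + t) : ℤ) * ((r + t).choose r : ℤ)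
        = (a.choose r : ℤ) * ((a - r).choose t : ℤ) := by exact_mod_cast congrArg Nat.cast h5
    linear_combination ((-1 : ℤ) ^ t) * h6
  rw [Finset.sum_congr rfl key, ← Finset.mul_sum, Int.alternating_sum_range_choose]
  by_cases har : a = r
  · simp [har]
  · have h6 : a - r ≠ 0 := by omega
    simp [har, h6]

private lemma lemB (p : ℕ) : ∀ a : ℕ,
    ∑ j ∈ Finset.Icc (p + 1) a, (-1 : ℤ) ^ (j - (p + 1)) * ((j - 1).choose p) * (a.choose j) =
      if p + 1 ≤ a then 1 else 0
  | 0 => by simp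
  | (a + 1) => by
    by_cases hpa : p ≤ a
    case neg =>
      have h1 : Finset.Icc (p + 1) (a + 1) = ∅ := Finset.Icc_eq_empty (by omega)
      rw [h1, if_neg (by omega)]
      simp
    case pos =>
      have pascal : ∀ j ∈ Finset.Icc (p + 1) (a + 1),
          (-1 : ℤ) ^ (j - (p + 1)) * ((j - 1).choose p) * ((a + 1).choose j) =
            (-1 : ℤ) ^ (j - (p + 1)) * ((j - 1).choose p) * (a.choose (j - 1))
            + (-1 : ℤ) ^ (j - (p + 1)) * ((j - 1).choose p) * (a.choose j) := by
        intro j hj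
        rw [Finset.mem_Icc] at hj
        obtain ⟨j, rfl⟩ : ∃ j', j = j' + 1 := ⟨j - 1, by omega⟩
        simp only [Nat.add_sub_cancel, Nat.choose_succ_succ]
        push_cast
        ring
      rw [Finset.sum_congr rfl pascal, Finset.sum_add_distrib]
      have second : ∑ j ∈ Finset.Icc (p + 1) (a + 1),
          (-1 : ℤ) ^ (j - (p + 1)) * ((j - 1).choose p) * (a.choose j)
          = if p + 1 ≤ a then 1 else 0 := by
        rw [Finset.sum_Icc_succ_top (by omega : p + 1 ≤ a + 1)]
        rw [Nat.choose_eq_zero_of_lt (show a < a + 1 by omega)]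
        rw [lemB p a]
        simp
      have first : ∑ j ∈ Finset.Icc (p + 1) (a + 1),
          (-1 : ℤ) ^ (j - (p + 1)) * ((j - 1).choose p) * (a.choose (j - 1))
          = if a = p then 1 else 0 := by
        rw [← Finset.Ico_add_one_right_eq_Icc, Finset.sum_Ico_eq_sum_range]
        have h2 : a + 1 + 1 - (p + 1) = a + 1 - p := by omega
        rw [h2, ← lemA p a hpa]
        refine Finset.sum_congr rfl fun t _ => ?_
        have e1 : p + 1 + t - (p + 1) = t := by omega
        have e2 : p + 1 + t - 1 = p + t := by omega
        rw [e1, e2]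
      rw [first, second]
      split_ifs <;> omega

theorem remoteness_inclusion_exclusion {d k : ℕ} {Alpha : Type*} [DecidableEq Alpha]
    (x : Fin d → Alpha) (X : Finset (Fin d → Alpha)) (hk : k < d) :
    (∀ y ∈ X, y ≠ x → k < hammingDist x y) ↔
      (if x ∈ X then (1 : ℤ) else 0) =
        ∑ I ∈ (Finset.univ : Finset (Fin d)).powerset.filter (fun I => d - k ≤ I.card),
          (-1 : ℤ) ^ (I.card - (d - k)) * ((I.card - 1).choose (d - k - 1)) *
            ((X.filter (fun y => ∀ i ∈ I, x i = y i)).card : ℤ) := by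
  obtain ⟨p, hp⟩ : ∃ p, d - k = p + 1 := ⟨d - k - 1, by omega⟩
  have hdk1 : d - k - 1 = p := by omega
  have key : ∑ I ∈ (Finset.univ : Finset (Fin d)).powerset.filter (fun I => d - k ≤ I.card),
          (-1 : ℤ) ^ (I.card - (d - k)) * ((I.card - 1).choose (d - k - 1)) *
            ((X.filter (fun y => ∀ i ∈ I, x i = y i)).card : ℤ)
      = ((X.filter (fun y => hammingDist x y ≤ k)).card : ℤ) := by
    have step1 : ∀ I : Finset (Fin d), ((X.filter (fun y => ∀ i ∈ I, x i = y i)).card : ℤ)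
        = ∑ y ∈ X, if (∀ i ∈ I, x i = y i) then (1 : ℤ) else 0 :=
      fun I => (Finset.sum_boole _ _).symm
    simp_rw [step1, Finset.mul_sum]
    rw [Finset.sum_comm]
    have inner : ∀ y ∈ X,
        (∑ I ∈ (Finset.univ : Finset (Fin d)).powerset.filter (fun I => d - k ≤ I.card),
          (-1 : ℤ) ^ (I.card - (d - k)) * ((I.card - 1).choose (d - k - 1)) *
            (if (∀ i ∈ I, x i = y i) then (1 : ℤ) else 0))
        = if hammingDist x y ≤ k then (1 : ℤ) else 0 := by
      intro y _
      set A : Finset (Fin d) := Finset.univ.filter (fun i => x i = y i) with hA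
      have hsub : ∀ I : Finset (Fin d), (∀ i ∈ I, x i = y i) ↔ I ⊆ A := by
        intro I
        simp [hA, Finset.subset_iff]
      have hcard : A.card + hammingDist x y = d := by
        have h0 := Finset.card_filter_add_card_filter_not
          (s := (Finset.univ : Finset (Fin d))) (p := fun i => x i = y i)
        simpa [hA, hammingDist, Finset.card_univ] using h0
      have hHD : hammingDist x y ≤ k ↔ p + 1 ≤ A.card := by omega
      calc ∑ I ∈ (Finset.univ : Finset (Fin d)).powerset.filter (fun I => d - k ≤ I.card),
            (-1 : ℤ) ^ (I.card - (d - k)) * ((I.card - 1).choose (d - k - 1)) *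
              (if (∀ i ∈ I, x i = y i) then (1 : ℤ) else 0)
          = ∑ I ∈ (Finset.univ : Finset (Fin d)).powerset,
              if d - k ≤ I.card then
                (-1 : ℤ) ^ (I.card - (d - k)) * ((I.card - 1).choose (d - k - 1)) *
                  (if (∀ i ∈ I, x i = y i) then (1 : ℤ) else 0) else 0 :=
            Finset.sum_filter _ _
        _ = ∑ I ∈ (Finset.univ : Finset (Fin d)).powerset,
              if I ⊆ A then (if d - k ≤ I.card then
                (-1 : ℤ) ^ (I.card - (d - k)) * ((I.card - 1).choose (d - k - 1)) else 0)
                else 0 := by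
            refine Finset.sum_congr rfl fun I _ => ?_
            by_cases h1 : I ⊆ A <;> by_cases h2 : d - k ≤ I.card <;>
              simp [h1, h2, (hsub I)]
        _ = ∑ I ∈ (Finset.univ : Finset (Fin d)).powerset.filter (fun I => I ⊆ A),
              (if d - k ≤ I.card then
                (-1 : ℤ) ^ (I.card - (d - k)) * ((I.card - 1).choose (d - k - 1)) else 0) :=
            (Finset.sum_filter _ _).symm
        _ = ∑ I ∈ A.powerset,
              (if d - k ≤ I.card then
                (-1 : ℤ) ^ (I.card - (d - k)) * ((I.card - 1).choose (d - k - 1)) else 0) := by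
            apply Finset.sum_congr _ fun I _ => rfl
            ext I
            simp [Finset.mem_powerset]
        _ = ∑ j ∈ Finset.range (A.card + 1), (A.card).choose j •
              (if d - k ≤ j then
                (-1 : ℤ) ^ (j - (d - k)) * ((j - 1).choose (d - k - 1)) else 0) :=
            Finset.sum_powerset_apply_card
              (fun j => if d - k ≤ j then
                (-1 : ℤ) ^ (j - (d - k)) * (((j - 1).choose (d - k - 1)) : ℤ) else 0)
        _ = ∑ j ∈ Finset.range (A.card + 1),
              (if p + 1 ≤ j then
                (-1 : ℤ) ^ (j - (p + 1)) * ((j - 1).choose p) * ((A.card).choose j) else 0) := by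
            refine Finset.sum_congr rfl fun j _ => ?_
            rw [hp]
            simp only [Nat.add_sub_cancel]
            by_cases h : p + 1 ≤ j <;> simp [h, nsmul_eq_mul] <;> ring
        _ = ∑ j ∈ (Finset.range (A.card + 1)).filter (fun j => p + 1 ≤ j),
              (-1 : ℤ) ^ (j - (p + 1)) * ((j - 1).choose p) * ((A.card).choose j) :=
            (Finset.sum_filter _ _).symm
        _ = ∑ j ∈ Finset.Icc (p + 1) A.card,
              (-1 : ℤ) ^ (j - (p + 1)) * ((j - 1).choose p) * ((A.card).choose j) := by
            apply Finset.sum_congr _ fun j _ => rfl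
            ext j
            simp only [Finset.mem_filter, Finset.mem_range, Finset.mem_Icc]
            omega
        _ = if hammingDist x y ≤ k then (1 : ℤ) else 0 := by
            rw [lemB p A.card]
            by_cases h : hammingDist x y ≤ k
            · rw [if_pos (hHD.mp h), if_pos h]
            · rw [if_neg (fun hc => h (hHD.mpr hc)), if_neg h]
    trans (∑ y ∈ X, if hammingDist x y ≤ k then (1 : ℤ) else 0)
    · exact Finset.sum_congr rfl inner
    · exact Finset.sum_boole _ _
  rw [key]
  constructor
  · intro h
    by_cases hx : x ∈ X
    · rw [if_pos hx]
      have hF : X.filter (fun y => hammingDist x y ≤ k) = {x} := by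
        ext y
        simp only [Finset.mem_filter, Finset.mem_singleton]
        constructor
        · rintro ⟨hyX, hyk⟩
          by_contra hne
          exact absurd hyk (not_le.2 (h y hyX hne))
        · rintro rfl
          exact ⟨hx, by simp [hammingDist_self]⟩
      rw [hF]
      simp
    · rw [if_neg hx]
      have hF : X.filter (fun y => hammingDist x y ≤ k) = ∅ := by
        ext y
        simp only [Finset.mem_filter, Finset.notMem_empty, iff_false, not_and]
        intro hyX hyk
        by_cases hne : y = x
        · exact hx (hne ▸ hyX)
        · exact absurd hyk (not_le.2 (h y hyX hne))
      rw [hF]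
      simp
  · intro h y hyX hne
    by_contra hlt
    push_neg at hlt
    have hyF : y ∈ X.filter (fun y => hammingDist x y ≤ k) := Finset.mem_filter.2 ⟨hyX, hlt⟩
    by_cases hx : x ∈ X
    · rw [if_pos hx] at h
      have hxF : x ∈ X.filter (fun y => hammingDist x y ≤ k) :=
        Finset.mem_filter.2 ⟨hx, by simp [hammingDist_self]⟩
      have h2 : 1 < (X.filter (fun y => hammingDist x y ≤ k)).card :=
        Finset.one_lt_card.2 ⟨x, hxF, y, hyF, fun hxy => hne hxy.symm⟩
      have h1 : (X.filter (fun y => hammingDist x y ≤ k)).card = 1 := by exact_mod_cast h.symm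
      rw [h1] at h2
      exact lt_irrefl 1 h2
    · rw [if_neg hx] at h
      have h1 : (X.filter (fun y => hammingDist x y ≤ k)).card = 0 := by exact_mod_cast h.symm
      rw [Finset.card_eq_zero] at h1
      rw [h1] at hyF
      exact absurd hyF (Finset.notMem_empty y)
end

section
/- Let X = {x_1,...,x_n} ⊆ {0,1}^d and let c_1,...,c_n ∈ {0,1}^{d''} be strings each of Hamming weight exactly 0.25d'' with pairwise Hamming distance at least 0.37d''. Let r = 10⌈d/d''⌉, and define a_i = x_i ∘ c_i^r and b_i = x̄_i ∘ 0^{r·d''}. Then for all i, j: HD(a_i, b_j) = d - HD(x_i, x_j) + r·0.25d''; for i ≠ j: HD(a_i, a_j) > d + r·0.25d''; and for all i, j: HD(b_i, b_j) ≤ d < r·0.25d''. -/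
/-- `r`-fold repetition of a string `c` of length `d''`. -/
def repStr {d'' : ℕ} (hd : 0 < d'') (r : ℕ) (c : Fin d'' → Bool) : Fin (r * d'') → Bool :=
  fun j => c ⟨j.val % d'', Nat.mod_lt _ hd⟩

lemma hd_append {m k : ℕ} (u u' : Fin m → Bool) (v v' : Fin k → Bool) :
    hammingDist (Fin.append u v) (Fin.append u' v') = hammingDist u u' + hammingDist v v' := by
  simp only [hammingDist, Finset.card_filter]
  rw [Fin.sum_univ_add]
  simp [Fin.append_left, Fin.append_right]

lemma sum_range_mod {d'' : ℕ} (f : ℕ → ℕ) (hf : ∀ m, f (m % d'') = f m) (r : ℕ) :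
    ∑ j ∈ Finset.range (r * d''), f j = r * ∑ j ∈ Finset.range d'', f j := by
  induction r with
  | zero => simp
  | succ r ih =>
    have h : (r + 1) * d'' = r * d'' + d'' := by ring
    rw [h, Finset.range_eq_Ico,
      ← Finset.sum_Ico_consecutive _ (Nat.zero_le (r * d'')) (Nat.le_add_right _ _),
      Finset.sum_Ico_eq_sum_range, Finset.sum_Ico_eq_sum_range]
    simp only [Nat.sub_zero, Nat.zero_add, Nat.add_sub_cancel_left]
    rw [ih, Nat.succ_mul]
    congr 1
    apply Finset.sum_congr rfl
    intro i hi
    rw [← hf (r * d'' + i), add_comm (r * d'') i, Nat.add_mul_mod_self_right, hf]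

lemma hd_rep {d'' : ℕ} (hd : 0 < d'') (r : ℕ) (c c' : Fin d'' → Bool) :
    hammingDist (repStr hd r c) (repStr hd r c') = r * hammingDist c c' := by
  simp only [hammingDist, Finset.card_filter]
  show (∑ i : Fin (r * d''),
    if c ⟨i.val % d'', Nat.mod_lt _ hd⟩ ≠ c' ⟨i.val % d'', Nat.mod_lt _ hd⟩ then 1 else 0) = _
  rw [Fin.sum_univ_eq_sum_range
    (fun m => if c ⟨m % d'', Nat.mod_lt _ hd⟩ ≠ c' ⟨m % d'', Nat.mod_lt _ hd⟩ then 1 else 0)]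
  rw [sum_range_mod _ (by intro m; simp [Nat.mod_mod_of_dvd _ dvd_rfl]) r]
  congr 1
  rw [← Fin.sum_univ_eq_sum_range]
  apply Finset.sum_congr rfl
  intro i _
  have hi : (⟨i.val % d'', Nat.mod_lt _ hd⟩ : Fin d'') = i := by
    ext; simp [Nat.mod_eq_of_lt i.isLt]
  rw [hi]

lemma hd_rep_zero {d'' : ℕ} (hd : 0 < d'') (r : ℕ) (c : Fin d'' → Bool) :
    hammingDist (repStr hd r c) (fun _ => false) =
      r * (Finset.univ.filter fun j => c j = true).card := by
  simp only [hammingDist, Finset.card_filter]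
  show (∑ i : Fin (r * d''), if c ⟨i.val % d'', Nat.mod_lt _ hd⟩ ≠ false then 1 else 0) = _
  rw [Fin.sum_univ_eq_sum_range
    (fun m => if c ⟨m % d'', Nat.mod_lt _ hd⟩ ≠ false then 1 else 0)]
  rw [sum_range_mod _ (by intro m; simp [Nat.mod_mod_of_dvd _ dvd_rfl]) r]
  congr 1
  rw [← Fin.sum_univ_eq_sum_range]
  apply Finset.sum_congr rfl
  intro i _
  have hi : (⟨i.val % d'', Nat.mod_lt _ hd⟩ : Fin d'') = i := by
    ext; simp [Nat.mod_eq_of_lt i.isLt]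
  rw [hi]
  cases c i <;> simp

lemma hd_compl {d : ℕ} (u v : Fin d → Bool) :
    hammingDist u (fun k => !(v k)) + hammingDist u v = d := by
  have h : (Finset.univ.filter fun k => u k ≠ !(v k)) =
      Finset.univ.filter fun k => ¬ (u k ≠ v k) := by
    apply Finset.filter_congr; intro k _; cases u k <;> cases v k <;> simp
  simp only [hammingDist]
  rw [h, add_comm, Finset.card_filter_add_card_filter_not, Finset.card_univ,
    Fintype.card_fin]

theorem gadget_distances {n d d'' : ℕ} (hn : 2 ≤ n) (hd : 1 ≤ d) (hd'' : 0 < d'')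
    (x : Fin n → Fin d → Bool) (c : Fin n → Fin d'' → Bool)
    (hw : ∀ i, 4 * (Finset.univ.filter fun j => c i j = true).card = d'')
    (hdist : ∀ i j, i ≠ j → 37 * d'' ≤ 100 * hammingDist (c i) (c j)) :
    let r := 10 * ((d + d'' - 1) / d'')
    let a : Fin n → Fin (d + r * d'') → Bool :=
      fun i => Fin.append (x i) (repStr hd'' r (c i))
    let b : Fin n → Fin (d + r * d'') → Bool :=
      fun i => Fin.append (fun j => !(x i j)) (fun _ => false)
    (∀ i j, 4 * hammingDist (a i) (b j) + 4 * hammingDist (x i) (x j) = 4 * d + r * d'') ∧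
    (∀ i j, i ≠ j → 4 * d + r * d'' < 4 * hammingDist (a i) (a j)) ∧
    (∀ i j, hammingDist (b i) (b j) ≤ d) ∧ 4 * d < r * d'' := by
  intro r a b
  have key : d ≤ d'' * ((d + d'' - 1) / d'') := by
    have h1 := Nat.div_add_mod (d + d'' - 1) d''
    have h2 := Nat.mod_lt (d + d'' - 1) hd''
    omega
  have hr : r * d'' = 10 * (d'' * ((d + d'' - 1) / d'')) := by
    show 10 * ((d + d'' - 1) / d'') * d'' = _; ring
  have hR : 10 * d ≤ r * d'' := by omega
  refine ⟨?_, ?_, ?_, by omega⟩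
  · intro i j
    have h1 : hammingDist (a i) (b j) =
        hammingDist (x i) (fun k => !(x j k)) +
          r * (Finset.univ.filter fun k => c i k = true).card := by
      show hammingDist (Fin.append _ _) (Fin.append _ _) = _
      rw [hd_append, hd_rep_zero]
    have h2 := hd_compl (x i) (x j)
    have h3 : r * d'' = 4 * (r * (Finset.univ.filter fun k => c i k = true).card) := by
      conv_lhs => rw [← hw i]
      ring
    omega
  · intro i j hij
    have h1 : hammingDist (a i) (a j) =
        hammingDist (x i) (x j) + r * hammingDist (c i) (c j) := by
      show hammingDist (Fin.append _ _) (Fin.append _ _) = _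
      rw [hd_append, hd_rep]
    have h2 := hdist i j hij
    have h3 : 37 * (r * d'') ≤ 100 * (r * hammingDist (c i) (c j)) := by
      calc 37 * (r * d'') = r * (37 * d'') := by ring
        _ ≤ r * (100 * hammingDist (c i) (c j)) := Nat.mul_le_mul_left r h2
        _ = 100 * (r * hammingDist (c i) (c j)) := by ring
    omega
  · intro i j
    have h1 : hammingDist (b i) (b j) =
        hammingDist (fun k => !(x i k)) (fun k => !(x j k)) := by
      show hammingDist (Fin.append _ _) (Fin.append _ _) = _
      rw [hd_append, hammingDist_self, add_zero]
    rw [h1]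
    calc hammingDist (fun k => !(x i k)) (fun k => !(x j k)) ≤ Fintype.card (Fin d) :=
        hammingDist_le_card_fintype
      _ = d := Fintype.card_fin d
end

section
/- Let Σ be an alphabet of size q, let C be a clause over q-ary variables touching groups P(C) of a partition of [N] into groups of size s with q | s, and let α* ∈ [q]^N be a balanced satisfying assignment of a formula containing C (α* satisfies C and assigns each value exactly s/q times per group). Then for every assignment α ∈ [q]^N that falsifies C and is constant on each group outside P(C), HD(α*, α) ≥ 1 + (N/s - |P(C)|) · (q-1)s/q. -/
theorem completeness_distance_bound {N q s : ℕ} (hq : 0 < q) (hqs : q ∣ s)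
    (P : Finset (Finset (Fin N)))
    (hcard : ∀ G ∈ P, G.card = s)
    (hdisj : ∀ G ∈ P, ∀ G' ∈ P, G ≠ G' → Disjoint G G')
    (hcover : ∀ i : Fin N, ∃ G ∈ P, i ∈ G)
    (C : Finset (Fin N × Fin q))
    (αstar : Fin N → Fin q)
    (hsat : ∃ l ∈ C, αstar l.1 ≠ l.2)
    (hbal : ∀ G ∈ P, ∀ v : Fin q, (G.filter fun i => αstar i = v).card = s / q)
    (α : Fin N → Fin q)
    (hfals : ∀ l ∈ C, α l.1 = l.2)
    (hconst : ∀ G ∈ P, (∀ l ∈ C, l.1 ∉ G) → ∃ v, ∀ i ∈ G, α i = v) :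
    1 + (N / s - (P.filter fun G => ∃ l ∈ C, l.1 ∈ G).card) * ((q - 1) * (s / q))
      ≤ hammingDist αstar α := by
  classical
  obtain ⟨l, hlC, hlne⟩ := hsat
  set i0 := l.1 with hi0
  have hdiff0 : αstar i0 ≠ α i0 := by rw [hfals l hlC]; exact hlne
  obtain ⟨G0, hG0P, hi0G0⟩ := hcover i0
  have hs : 0 < s := by
    rw [← hcard G0 hG0P]; exact Finset.card_pos.mpr ⟨i0, hi0G0⟩
  set Q := P.filter fun G => ∃ l ∈ C, l.1 ∈ G with hQ
  have hG0Q : G0 ∈ Q := Finset.mem_filter.mpr ⟨hG0P, l, hlC, hi0G0⟩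
  set B := P \ Q with hB
  -- cardinality of P
  have hPcard : P.card = N / s := by
    have huniv : (Finset.univ : Finset (Fin N)) = P.biUnion id := by
      ext i
      simp only [Finset.mem_biUnion, id, Finset.mem_univ, true_iff]
      exact hcover i
    have : N = P.card * s := by
      have hbu := Finset.card_biUnion (fun G hG G' hG' hne => hdisj G hG G' hG' hne)
      calc N = (Finset.univ : Finset (Fin N)).card := by simp
        _ = (P.biUnion id).card := by rw [huniv]
        _ = ∑ G ∈ P, (id G).card := hbu
        _ = ∑ G ∈ P, s := Finset.sum_congr rfl fun G hG => hcard G hG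
        _ = P.card * s := by rw [Finset.sum_const, smul_eq_mul]
    conv_rhs => rw [this]
    exact (Nat.mul_div_cancel _ hs).symm
  -- per-group difference count
  have hgrp : ∀ G ∈ B, (G.filter fun i => αstar i ≠ α i).card = (q - 1) * (s / q) := by
    intro G hGB
    obtain ⟨hGP, hGnQ⟩ := Finset.mem_sdiff.mp hGB
    have hno : ∀ l ∈ C, l.1 ∉ G := by
      intro l' hl' hmem
      exact hGnQ (Finset.mem_filter.mpr ⟨hGP, l', hl', hmem⟩)
    obtain ⟨v, hv⟩ := hconst G hGP hno
    have heq : (G.filter fun i => αstar i ≠ α i) = G.filter fun i => ¬ αstar i = v := by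
      apply Finset.filter_congr
      intro i hi
      rw [hv i hi]
    have hsplit := Finset.card_filter_add_card_filter_not
      (s := G) (p := fun i => αstar i = v)
    rw [heq]
    have hvcard := hbal G hGP v
    have hgc := hcard G hGP
    have hcc : (G.filter fun i => ¬ αstar i = v).card = s - s / q := by omega
    rw [hcc]
    obtain ⟨k, hk⟩ := hqs
    subst hk
    rw [Nat.mul_div_cancel_left _ hq, Nat.sub_mul, one_mul]
  -- the union set
  set T := B.biUnion (fun G => G.filter fun i => αstar i ≠ α i) with hT
  have hTcard : T.card = B.card * ((q - 1) * (s / q)) := by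
    rw [hT, Finset.card_biUnion]
    · rw [Finset.sum_congr rfl hgrp, Finset.sum_const, smul_eq_mul]
    · intro G hG G' hG' hne
      have h := hdisj G (Finset.mem_sdiff.mp hG).1 G' (Finset.mem_sdiff.mp hG').1 hne
      exact Finset.disjoint_filter_filter h
  have hi0T : i0 ∉ T := by
    intro hmem
    obtain ⟨G, hGB, hiG⟩ := Finset.mem_biUnion.mp hmem
    have hiG' := Finset.mem_filter.mp hiG |>.1
    obtain ⟨hGP, hGnQ⟩ := Finset.mem_sdiff.mp hGB
    have hne : G ≠ G0 := fun h => hGnQ (h ▸ hG0Q)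
    exact Finset.disjoint_left.mp (hdisj G hGP G0 hG0P hne) hiG' hi0G0
  have hBcard : B.card = N / s - Q.card := by
    rw [hB, Finset.card_sdiff_of_subset (Finset.filter_subset _ _), hPcard]
  have hsub : insert i0 T ⊆ Finset.univ.filter (fun i => αstar i ≠ α i) := by
    intro i hi
    rcases Finset.mem_insert.mp hi with h | h
    · subst h; exact Finset.mem_filter.mpr ⟨Finset.mem_univ _, hdiff0⟩
    · obtain ⟨G, hGB, hiG⟩ := Finset.mem_biUnion.mp h
      exact Finset.mem_filter.mpr ⟨Finset.mem_univ _, (Finset.mem_filter.mp hiG).2⟩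
  have hins : (insert i0 T).card = 1 + T.card := by
    rw [Finset.card_insert_of_notMem hi0T]; omega
  calc 1 + (N / s - Q.card) * ((q - 1) * (s / q))
      = (insert i0 T).card := by rw [hins, hTcard, hBcard]
    _ ≤ (Finset.univ.filter (fun i => αstar i ≠ α i)).card := Finset.card_le_card hsub
    _ = hammingDist αstar α := by simp [hammingDist]
end

section
/- Let q | s, let a partition of [N] into groups of size s be given, let C be a clause touching groups P(C), and let α* ∈ [q]^N be any assignment falsifying C. Then there exists α ∈ [q]^N such that α falsifies C, α is constant on every group outside P(C), and HD(α*, α) ≤ (N/s - |P(C)|) · (q-1)s/q. -/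
theorem soundness_close_falsifier {N q s : ℕ} (hq : 0 < q) (hqs : q ∣ s)
    (P : Finset (Finset (Fin N)))
    (hcard : ∀ G ∈ P, G.card = s)
    (hdisj : ∀ G ∈ P, ∀ G' ∈ P, G ≠ G' → Disjoint G G')
    (hcover : ∀ i : Fin N, ∃ G ∈ P, i ∈ G)
    (C : Finset (Fin N × Fin q))
    (αstar : Fin N → Fin q)
    (hfals : ∀ l ∈ C, αstar l.1 = l.2) :
    ∃ α : Fin N → Fin q,
      (∀ l ∈ C, α l.1 = l.2) ∧
      (∀ G ∈ P, (∀ l ∈ C, l.1 ∉ G) → ∃ v, ∀ i ∈ G, α i = v) ∧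
      hammingDist αstar α
        ≤ (N / s - (P.filter fun G => ∃ l ∈ C, l.1 ∈ G).card) * ((q - 1) * (s / q)) := by
  classical
  rcases Nat.eq_zero_or_pos s with hs | hs
  · refine ⟨αstar, hfals, ?_, ?_⟩
    · intro G hG _
      refine ⟨⟨0, hq⟩, fun i hi => ?_⟩
      have h0 : G.card = 0 := hs ▸ hcard G hG
      rw [Finset.card_eq_zero] at h0
      simp [h0] at hi
    · simp [hammingDist_self]
  -- main case s > 0
  set T := P.filter fun G => ∃ l ∈ C, l.1 ∈ G with hT
  -- majority values
  have hmaj : ∀ G ∈ P, ∃ v : Fin q, s / q ≤ (G.filter fun i => αstar i = v).card := by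
    intro G hG
    have hne : (Finset.univ : Finset (Fin q)).Nonempty := ⟨⟨0, hq⟩, Finset.mem_univ _⟩
    have hle : (Finset.univ : Finset (Fin q)).card * (s / q) ≤ G.card := by
      rw [hcard G hG, Finset.card_univ, Fintype.card_fin]
      exact (Nat.mul_div_cancel' hqs).le
    obtain ⟨v, _, hv⟩ := Finset.exists_le_card_fiber_of_mul_le_card_of_maps_to
      (fun i (_ : i ∈ G) => Finset.mem_univ (αstar i)) hne hle
    exact ⟨v, hv⟩
  -- group function
  have hg : ∀ i : Fin N, ∃ G, G ∈ P ∧ i ∈ G := by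
    intro i; obtain ⟨G, hG, hi⟩ := hcover i; exact ⟨G, hG, hi⟩
  let g : Fin N → Finset (Fin N) := fun i => (hg i).choose
  have hgP : ∀ i, g i ∈ P := fun i => (hg i).choose_spec.1
  have hgi : ∀ i, i ∈ g i := fun i => (hg i).choose_spec.2
  have huniq : ∀ G ∈ P, ∀ i ∈ G, g i = G := by
    intro G hG i hi
    by_contra hne
    exact Finset.disjoint_left.1 (hdisj _ (hgP i) _ hG hne) (hgi i) hi
  let v : Finset (Fin N) → Fin q := fun G =>
    if h : G ∈ P then (hmaj G h).choose else ⟨0, hq⟩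
  have hv : ∀ G ∈ P, s / q ≤ (G.filter fun i => αstar i = v G).card := by
    intro G hG
    simpa only [v, dif_pos hG] using (hmaj G hG).choose_spec
  let α : Fin N → Fin q := fun i => if g i ∈ T then αstar i else v (g i)
  have hαT : ∀ i, g i ∈ T → α i = αstar i := fun i h => by simp [α, h]
  have hαnT : ∀ i, g i ∉ T → α i = v (g i) := fun i h => by simp [α, h]
  refine ⟨α, ?_, ?_, ?_⟩
  · intro l hl
    have hTl : g l.1 ∈ T := by
      rw [hT, Finset.mem_filter]
      exact ⟨hgP l.1, l, hl, hgi l.1⟩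
    rw [hαT l.1 hTl]; exact hfals l hl
  · intro G hG hnot
    refine ⟨v G, fun i hi => ?_⟩
    have hgiG : g i = G := huniq G hG i hi
    have hnT : g i ∉ T := by
      rw [hgiG, hT, Finset.mem_filter]
      push_neg
      intro _ l hl
      exact hnot l hl
    rw [hαnT i hnT, hgiG]
  · -- distance bound
    set U := P \ T with hU
    have hdsub : ({i | αstar i ≠ α i} : Finset (Fin N)) ⊆
        U.biUnion (fun G => G.filter fun i => αstar i ≠ v G) := by
      intro i hi
      rw [Finset.mem_filter] at hi
      have hnT : g i ∉ T := by
        intro h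
        exact hi.2 (hαT i h).symm
      rw [Finset.mem_biUnion]
      refine ⟨g i, ?_, ?_⟩
      · rw [hU, Finset.mem_sdiff]; exact ⟨hgP i, hnT⟩
      · rw [Finset.mem_filter]
        refine ⟨hgi i, ?_⟩
        rw [hαnT i hnT] at hi
        exact hi.2
    have hdcard : hammingDist αstar α ≤
        ∑ G ∈ U, (G.filter fun i => αstar i ≠ v G).card := by
      calc hammingDist αstar α ≤ (U.biUnion fun G => G.filter fun i => αstar i ≠ v G).card :=
            Finset.card_le_card hdsub
        _ ≤ ∑ G ∈ U, (G.filter fun i => αstar i ≠ v G).card := Finset.card_biUnion_le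
    have hGbound : ∀ G ∈ U, (G.filter fun i => αstar i ≠ v G).card ≤ s - s / q := by
      intro G hGU
      have hG : G ∈ P := (Finset.mem_sdiff.1 hGU).1
      have hsum := Finset.card_filter_add_card_filter_not
        (s := G) (p := fun i => αstar i = v G)
      have : (G.filter fun i => ¬ αstar i = v G).card = G.card -
          (G.filter fun i => αstar i = v G).card := by omega
      rw [this, hcard G hG]
      exact Nat.sub_le_sub_left (hv G hG) s
    have hsum : ∑ G ∈ U, (G.filter fun i => αstar i ≠ v G).card ≤ U.card * (s - s / q) := by
      calc ∑ G ∈ U, (G.filter fun i => αstar i ≠ v G).card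
          ≤ ∑ _G ∈ U, (s - s / q) := Finset.sum_le_sum hGbound
        _ = U.card * (s - s / q) := by rw [Finset.sum_const, smul_eq_mul]
    -- P.card = N / s
    have hPN : P.card * s = N := by
      have hcov : Finset.univ = P.biUnion id := by
        ext i
        simp only [Finset.mem_univ, Finset.mem_biUnion, id, true_iff]
        exact hcover i
      calc P.card * s = ∑ G ∈ P, G.card := by
            rw [Finset.sum_congr rfl hcard, Finset.sum_const, smul_eq_mul]
        _ = (P.biUnion id).card :=
            (Finset.card_biUnion (fun G hG G' hG' hne => hdisj G hG G' hG' hne)).symm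
        _ = N := by rw [← hcov, Finset.card_univ, Fintype.card_fin]
    have hPcard : P.card = N / s :=
      (Nat.div_eq_of_eq_mul_left hs hPN.symm).symm
    have hUcard : U.card = N / s - T.card := by
      rw [hU, Finset.card_sdiff_of_subset (Finset.filter_subset _ _), hPcard]
    have hqq : s - s / q = (q - 1) * (s / q) := by
      have h1 : q * (s / q) = s := Nat.mul_div_cancel' hqs
      have h2 : (q - 1) * (s / q) = q * (s / q) - 1 * (s / q) := by
        rw [← Nat.sub_mul]
      omega
    calc hammingDist αstar α ≤ U.card * (s - s / q) := le_trans hdcard hsum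
      _ = (N / s - T.card) * ((q - 1) * (s / q)) := by rw [hUcard, hqq]
end
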